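/- Let N < L/2 and μ ≥ ln 2. Then Σ_{x ∈ 𝒱_L^N} exp(−μ · d_L^N(x, 𝒱_{L,1}^N)) ≤ L(1 + 2^9 e^{−μ}), where the sum runs over all N-particle configurations on the cycle of length L and d_L^N(x, 𝒱_{L,1}^N) is the hard-core graph distance from x to the set of droplet (cluster) configurations. -/

import Mathlib

open Finset
open scoped Classical
open Fin.NatCast

noncomputable section

/-- Distance on the cycle `ℤ/L`. -/
def cycDist {L : ℕ} (a b : Fin L) : ℕ := min (a - b).val (b - a).val

/-- Hard-core configuration graph: an edge moves one particle to a free neighbouring site. -/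
def hcGraph (L : ℕ) [NeZero L] : SimpleGraph (Finset (Fin L)) where
  Adj x y := x.card = y.card ∧ ∃ j : Fin L, symmDiff x y = {j, j + ((1 : ℕ) : Fin L)}
  symm := by
    constructor
    rintro x y ⟨h1, j, h2⟩
    refine ⟨h1.symm, j, ?_⟩
    rw [symmDiff_comm]
    exact h2
  loopless := by
    constructor
    rintro x ⟨-, j, h2⟩
    have hj : j ∈ symmDiff x x := by rw [h2]; simp
    rw [symmDiff_self] at hj
    simp at hj

/-- Graph distance `d_L^N` on the hard-core configuration graph. -/
def dN (L : ℕ) [NeZero L] (x y : Finset (Fin L)) : ℕ := (hcGraph L).dist x y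

/-- The droplet (cluster of `N` consecutive sites) centred at `m`. -/
def droplet (L N : ℕ) [NeZero L] (m : Fin L) : Finset (Fin L) :=
  (Finset.range N).image fun i => m - (((N - 1) / 2 : ℕ) : Fin L) + (i : Fin L)

def isDroplet (L N : ℕ) [NeZero L] (c : Finset (Fin L)) : Prop := ∃ m : Fin L, c = droplet L N m

/-- Distance to the set of droplet configurations. -/
def distDrop (L N : ℕ) [NeZero L] (x : Finset (Fin L)) : ℕ :=
  sInf (Set.range fun m : Fin L => dN L x (droplet L N m))

/-- Centres of droplets closest to `x`. -/
def WL (L N : ℕ) [NeZero L] (x : Finset (Fin L)) : Set (Fin L) :=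
  {m : Fin L | dN L x (droplet L N m) = distDrop L N x}

/-- A path of length `k` from `x` to `y` in the configuration graph. -/
def IsPathN (L : ℕ) [NeZero L] (u : ℕ → Finset (Fin L)) (k : ℕ) (x y : Finset (Fin L)) : Prop :=
  u 0 = x ∧ u k = y ∧ ∀ l < k, (hcGraph L).Adj (u l) (u (l + 1))

/-- The particle-tracking of a path: the labelled positions `ũ`. -/
def IsTracking (L N : ℕ) [NeZero L] (u : ℕ → Finset (Fin L)) (k : ℕ) (ut : ℕ → Fin N → Fin L) : Prop :=
  StrictMono (ut 0) ∧
  (∀ l ≤ k, u l = Finset.image (ut l) Finset.univ) ∧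
  ∀ l < k, ∀ j : Fin N, (ut l j ∈ u (l + 1) → ut (l + 1) j = ut l j) ∧
    (ut l j ∉ u (l + 1) → ut (l + 1) j ∈ u (l + 1) \ u l)

/-- `L_j^u` : distance travelled by particle `j` along the tracked path. -/
def travel {L N : ℕ} (ut : ℕ → Fin N → Fin L) (k : ℕ) (j : Fin N) : ℕ :=
  ∑ l ∈ Finset.range k, cycDist (ut l j) (ut (l + 1) j)

/-- `I_-^u` : particles moving counter-clockwise. -/
def Iminus {L N : ℕ} [NeZero L] (ut : ℕ → Fin N → Fin L) (k : ℕ) (j : Fin N) : Prop :=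
  travel ut k j ≠ 0 ∧ ∃ l ≤ k, ut l j = ut 0 j - ((1 : ℕ) : Fin L)

/-- `I_+^u` : particles moving clockwise. -/
def Iplus {L N : ℕ} [NeZero L] (ut : ℕ → Fin N → Fin L) (k : ℕ) (j : Fin N) : Prop :=
  travel ut k j ≠ 0 ∧ ∃ l ≤ k, ut l j = ut 0 j + ((1 : ℕ) : Fin L)

/-- `I_0^u` : particles that do not move. -/
def I0 {L N : ℕ} (ut : ℕ → Fin N → Fin L) (k : ℕ) (j : Fin N) : Prop := travel ut k j = 0

/-- The midpoint `M = ⌊(L-1)/2⌋` of the cycle. -/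
def midL (L : ℕ) [NeZero L] : Fin L := (((L - 1) / 2 : ℕ) : Fin L)

/-- The sector of size `θ` around `m`, as a set. -/
def sector (L : ℕ) [NeZero L] (m : Fin L) (θ : ℝ) : Set (Fin L) :=
  {k : Fin L | (cycDist k m : ℝ) < θ * L}

/-- The sector of size `θ` around `m`, as a finset. -/
def secF (L : ℕ) [NeZero L] (m : Fin L) (θ : ℝ) : Finset (Fin L) :=
  Finset.univ.filter fun k => (cycDist k m : ℝ) < θ * L

namespace HCAux

open Fin.CommRing

set_option linter.unusedSectionVars false
set_option maxHeartbeats 1000000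

variable {L : ℕ} [NeZero L]

lemma val_natCast (n : ℕ) : ((n : Fin L)).val = n % L := by simp [Fin.val_natCast]

lemma val_natCast_of_lt {n : ℕ} (h : n < L) : ((n : Fin L)).val = n := by
  simp [Fin.val_natCast, Nat.mod_eq_of_lt h]

/-- coordinate of `s` relative to `a` -/
def coord (a s : Fin L) : ℕ := (s - a).val

lemma coord_lt (a s : Fin L) : coord a s < L := (s - a).isLt

lemma coord_inj {a s t : Fin L} (h : coord a s = coord a t) : s = t := by
  have : s - a = t - a := Fin.ext h
  exact sub_left_injective this

lemma eq_add_coord (a s : Fin L) : s = a + ((coord a s : ℕ) : Fin L) := by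
  rw [coord, Fin.cast_val_eq_self]
  ring

lemma coord_add (a : Fin L) {i : ℕ} (hi : i < L) : coord a (a + (i : Fin L)) = i := by
  rw [coord, add_sub_cancel_left, val_natCast_of_lt hi]

lemma coord_add_one' (a s : Fin L) : coord a (s + 1) = (coord a s + 1) % L := by
  have h1 : (1 : Fin L) = ((1:ℕ) : Fin L) := by simp
  have h2 : s + 1 - a = (s - a) + 1 := by ring
  have hv : ((1 : Fin L)).val = 1 % L := by rw [h1, val_natCast]
  rw [coord, h2, Fin.add_def, Fin.val_mk, hv, coord]
  conv_rhs => rw [Nat.add_mod]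
  conv_lhs => rw [Nat.add_mod]
  simp [Nat.mod_mod_of_dvd]

lemma coord_add_one (a s : Fin L) :
    coord a (s + 1) = if coord a s = L - 1 then 0 else coord a s + 1 := by
  have hlt := coord_lt a s
  have hL : 1 ≤ L := Nat.one_le_iff_ne_zero.2 (NeZero.ne L)
  rw [coord_add_one']
  rcases eq_or_ne (coord a s) (L - 1) with h | h
  · rw [if_pos h, h]
    have : L - 1 + 1 = L := by omega
    rw [this, Nat.mod_self]
  · rw [if_neg h, Nat.mod_eq_of_lt (by omega)]


/-- the interval of length `N` starting at `a` -/
def itv (a : Fin L) (N : ℕ) : Finset (Fin L) := (Finset.range N).image fun i => a + (i : Fin L)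

lemma mem_itv' {N : ℕ} (a s : Fin L) :
    s ∈ itv a N ↔ ∃ i : ℕ, i < N ∧ (i : Fin L) = s - a := by
  simp only [itv]
  simp [neg_add_eq_sub]

lemma itv_eq (a : Fin L) (N : ℕ) :
    itv a N = Finset.image (fun i : ℕ => a + (Nat.cast i : Fin L)) (Finset.range N) := by
  ext s
  rw [mem_itv', Finset.mem_image]
  constructor
  · rintro ⟨i, hi, h⟩
    exact ⟨i, Finset.mem_range.2 hi, by rw [h]; ring⟩
  · rintro ⟨i, hi, rfl⟩
    exact ⟨i, Finset.mem_range.1 hi, by ring⟩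

lemma mem_itv {a : Fin L} {N : ℕ} (hN : N ≤ L) {s : Fin L} :
    s ∈ itv a N ↔ coord a s < N := by
  rw [itv_eq, Finset.mem_image]
  constructor
  · rintro ⟨i, hi, rfl⟩
    rw [Finset.mem_range] at hi
    rwa [coord_add a (lt_of_lt_of_le hi hN)]
  · intro h
    exact ⟨coord a s, Finset.mem_range.2 h, (eq_add_coord a s).symm⟩

lemma card_itv (a : Fin L) {N : ℕ} (hN : N ≤ L) : (itv a N).card = N := by
  rw [itv_eq, Finset.card_image_of_injOn, Finset.card_range]
  intro i hi j hj hij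
  simp only [Finset.coe_range, Set.mem_Iio] at hi hj
  have hij' : a + ((i:ℕ):Fin L) = a + ((j:ℕ):Fin L) := hij
  have : coord a (a + ((i:ℕ):Fin L)) = coord a (a + ((j:ℕ):Fin L)) := by rw [hij']
  rwa [coord_add a (lt_of_lt_of_le hi hN), coord_add a (lt_of_lt_of_le hj hN)] at this

lemma droplet_eq_itv (L N : ℕ) [NeZero L] (m : Fin L) :
    droplet L N m = itv (m - (((N - 1) / 2 : ℕ) : Fin L)) N := rfl

/-- moving a particle one step clockwise -/
lemma adj_move_right {x : Finset (Fin L)} {s : Fin L} (hs : s ∈ x) (h1 : s + 1 ∉ x) :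
    (hcGraph L).Adj x (insert (s + 1) (x.erase s)) := by
  have hne : s ≠ s + 1 := fun h => h1 (h ▸ hs)
  constructor
  · rw [Finset.card_insert_of_notMem (fun h => h1 (Finset.mem_of_mem_erase h)),
      Finset.card_erase_of_mem hs]
    have : 1 ≤ x.card := Finset.card_pos.2 ⟨s, hs⟩
    omega
  · refine ⟨s, ?_⟩
    have h1' : ((1:ℕ) : Fin L) = (1 : Fin L) := by simp
    rw [h1']
    ext u
    simp only [Finset.mem_symmDiff, Finset.mem_insert, Finset.mem_erase, Finset.mem_singleton]
    by_cases hus : u = s <;> by_cases hus1 : u = s + 1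
    · exact absurd (hus ▸ hus1) hne
    · subst hus; simp_all
    · subst hus1; simp_all
    · simp_all <;> tauto

/-- moving a particle one step counter-clockwise -/
lemma adj_move_left {x : Finset (Fin L)} {s : Fin L} (hs : s ∈ x) (h1 : s - 1 ∉ x) :
    (hcGraph L).Adj x (insert (s - 1) (x.erase s)) := by
  set y := insert (s - 1) (x.erase s) with hy
  have hts : s - 1 + 1 = s := by ring
  have hsy : s - 1 ∈ y := Finset.mem_insert_self _ _
  have hny : s - 1 + 1 ∉ y := by
    rw [hts, hy]
    intro h
    rcases Finset.mem_insert.1 h with h' | h'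
    · exact h1 (h' ▸ hs)
    · exact (Finset.notMem_erase s x) h'
  have hadj := adj_move_right hsy hny
  rw [hts] at hadj
  have hxe : y.erase (s - 1) = x.erase s := by
    rw [hy]
    exact Finset.erase_insert (fun h => h1 (Finset.mem_of_mem_erase h))
  have hx : insert s (y.erase (s - 1)) = x := by
    rw [hxe]
    exact Finset.insert_erase hs
  rw [hx] at hadj
  exact hadj.symm

lemma eq_iff_coord (a : Fin L) {u v : Fin L} : u = v ↔ coord a u = coord a v :=
  ⟨fun h => by rw [h], coord_inj⟩

lemma coord_succ_base (a s : Fin L) :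
    coord (a + 1) s = if coord a s = 0 then L - 1 else coord a s - 1 := by
  have hL : 1 ≤ L := Nat.one_le_iff_ne_zero.2 (NeZero.ne L)
  have h1 : coord a s = coord (a+1) (s+1) := by
    unfold coord
    congr 1
    ring
  rw [coord_add_one'] at h1
  have hd := coord_lt (a+1) s
  rcases Nat.lt_or_ge (coord (a+1) s + 1) L with h | h
  · rw [Nat.mod_eq_of_lt h] at h1
    rw [if_neg (by omega)]
    omega
  · have hle : coord (a+1) s = L - 1 := by omega
    rw [hle] at h1 ⊢
    have h2 : L - 1 + 1 = L := by omega
    rw [h2, Nat.mod_self] at h1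
    rw [if_pos h1]

/-- intermediate configurations while rotating an interval -/
def urot (a : Fin L) (N t : ℕ) : Finset (Fin L) :=
  Finset.univ.filter (fun s => coord a s ≤ N ∧ coord a s ≠ N - t)

lemma mem_urot {a : Fin L} {N t : ℕ} {s : Fin L} :
    s ∈ urot a N t ↔ coord a s ≤ N ∧ coord a s ≠ N - t := by
  simp [urot]

lemma urot_zero {a : Fin L} {N : ℕ} (hNL : N < L) : urot a N 0 = itv a N := by
  ext s
  rw [mem_urot, mem_itv (le_of_lt hNL)]
  omega

lemma urot_last {a : Fin L} {N : ℕ} (hNL : N < L) : urot a N N = itv (a + 1) N := by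
  ext s
  rw [mem_urot, mem_itv (le_of_lt hNL)]
  have h := coord_succ_base a s
  have h2 := coord_lt a s
  have h3 := coord_lt (a+1) s
  rcases eq_or_ne (coord a s) 0 with h0 | h0
  · rw [if_pos h0] at h
    omega
  · rw [if_neg h0] at h
    omega

lemma urot_adj {a : Fin L} {N t : ℕ} (hNL : N < L) (ht : t < N) :
    (hcGraph L).Adj (urot a N t) (urot a N (t + 1)) := by
  set k := N - t with hk
  have hk1 : 1 ≤ k := by omega
  have hkN : k ≤ N := by omega
  set s₀ : Fin L := a + ((k - 1 : ℕ) : Fin L) with hs₀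
  have hc0 : coord a s₀ = k - 1 := coord_add a (by omega)
  have hsucc : s₀ + 1 = a + ((k : ℕ) : Fin L) := by
    rw [hs₀, add_assoc]
    congr 1
    have : ((k - 1 : ℕ) : Fin L) + 1 = (((k - 1) + 1 : ℕ) : Fin L) := by push_cast; ring
    rw [this]
    congr 1
    omega
  have hc1 : coord a (s₀ + 1) = k := by rw [hsucc]; exact coord_add a (by omega)
  have hmem : s₀ ∈ urot a N t := mem_urot.2 (by omega)
  have hnmem : s₀ + 1 ∉ urot a N t := by
    rw [mem_urot]
    omega
  have hadj := adj_move_right hmem hnmem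
  have heq : insert (s₀ + 1) ((urot a N t).erase s₀) = urot a N (t + 1) := by
    ext u
    rw [Finset.mem_insert, Finset.mem_erase, mem_urot, mem_urot]
    rw [eq_iff_coord a (u := u) (v := s₀ + 1), hc1, Ne, eq_iff_coord a (u := u) (v := s₀), hc0]
    omega
  rwa [heq] at hadj

lemma reach_itv_succ {a : Fin L} {N : ℕ} (hNL : N < L) :
    (hcGraph L).Reachable (itv a N) (itv (a + 1) N) := by
  have key : ∀ t, t ≤ N → (hcGraph L).Reachable (urot a N 0) (urot a N t) := by
    intro t
    induction t with
    | zero => intro _; exact SimpleGraph.Reachable.refl _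
    | succ n ih =>
      intro h
      exact (ih (by omega)).trans (urot_adj hNL (by omega)).reachable
  have := key N le_rfl
  rwa [urot_zero hNL, urot_last hNL] at this

lemma reach_itv {N : ℕ} (hNL : N < L) (a b : Fin L) :
    (hcGraph L).Reachable (itv a N) (itv b N) := by
  have key : ∀ k : ℕ, (hcGraph L).Reachable (itv a N) (itv (a + (k : Fin L)) N) := by
    intro k
    induction k with
    | zero => simpa using SimpleGraph.Reachable.refl _
    | succ n ih =>
      have : a + ((n + 1 : ℕ) : Fin L) = (a + (n : Fin L)) + 1 := by push_cast; ring
      rw [this]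
      exact ih.trans (reach_itv_succ hNL)
  have := key (coord a b)
  rwa [← eq_add_coord a b] at this

lemma downward_closed_eq_range {S : Finset ℕ} (h : ∀ i ∈ S, i ≠ 0 → i - 1 ∈ S) :
    S = Finset.range S.card := by
  have key : ∀ i, i ∈ S → ∀ j, j ≤ i → j ∈ S := by
    intro i
    induction i with
    | zero => intro hi j hj; interval_cases j; exact hi
    | succ n ih =>
      intro hi j hj
      rcases eq_or_ne j (n+1) with rfl | hne
      · exact hi
      · have hn : n ∈ S := by simpa using h _ hi (by omega)
        exact ih hn j (by omega)
  have hsub : S ⊆ Finset.range S.card := by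
    intro i hi
    rw [Finset.mem_range]
    have : Finset.range (i+1) ⊆ S := by
      intro j hj
      exact key i hi j (by simpa using Nat.lt_succ_iff.1 (Finset.mem_range.1 hj))
    have := Finset.card_le_card this
    simp at this
    omega
  exact Finset.eq_of_subset_of_card_le hsub (by simp)

lemma coord_self_pred (z : Fin L) : coord (z + 1) z = L - 1 := by
  have hL : 1 ≤ L := Nat.one_le_iff_ne_zero.2 (NeZero.ne L)
  have h1 : z - (z + 1) = ((L - 1 : ℕ) : Fin L) := by
    have : ((L - 1 : ℕ) : Fin L) + 1 = ((L : ℕ) : Fin L) := by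
      push_cast
      have : (L - 1 : ℕ) + 1 = L := by omega
      rw [← Nat.cast_one (R := Fin L), ← Nat.cast_add, this]
    have hz : ((L : ℕ) : Fin L) = 0 := by
      simp
    rw [hz] at this
    have := eq_sub_of_add_eq this
    rw [this]
    ring
  rw [coord, h1, val_natCast_of_lt (by omega)]

lemma reach_S (N : ℕ) (hNL : N < L) (b : Fin L) :
    ∀ n (S : Finset ℕ), (∑ i ∈ S, i = n) → S.card = N → (∀ i ∈ S, i < L - 1) →
      (hcGraph L).Reachable (S.image (fun i : ℕ => b + (i : Fin L))) (itv b N) := by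
  intro n
  induction n using Nat.strong_induction_on with
  | _ n ih =>
    intro S hsum hcard hbd
    by_cases hS : S = Finset.range N
    · subst hS
      rw [← itv_eq]
    · have hex : ∃ i ∈ S, i ≠ 0 ∧ i - 1 ∉ S := by
        by_contra hc
        push_neg at hc
        have : S = Finset.range S.card := downward_closed_eq_range (fun i hi hi0 => hc i hi hi0)
        rw [hcard] at this
        exact hS this
      obtain ⟨i, hiS, hi0, hi1⟩ := hex
      set f : ℕ → Fin L := fun i => b + (i : Fin L) with hf
      have hfcoord : ∀ j, j < L → coord b (f j) = j := fun j hj => coord_add b hj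
      have hiL : i < L - 1 := hbd i hiS
      set s : Fin L := f i with hs
      have hsx : s ∈ S.image f := Finset.mem_image_of_mem f hiS
      have hpred : s - 1 = f (i - 1) := by
        have h2 : f (i - 1) + 1 = f i := by
          show b + ((i - 1 : ℕ) : Fin L) + 1 = b + ((i : ℕ) : Fin L)
          rw [add_assoc]
          congr 1
          have h3 : ((i - 1 : ℕ) : Fin L) + (((1:ℕ)) : Fin L) = (((i-1) + 1 : ℕ) : Fin L) :=
            (Nat.cast_add _ _).symm
          rw [Nat.cast_one] at h3
          rw [h3]
          congr 1
          omega
        rw [hs, ← h2]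
        ring
      have hnpred : s - 1 ∉ S.image f := by
        rw [hpred]
        intro hmem
        obtain ⟨j, hjS, hj⟩ := Finset.mem_image.1 hmem
        have hjL : j < L - 1 := hbd j hjS
        have := congrArg (coord b) hj
        rw [hfcoord j (by omega), hfcoord (i-1) (by omega)] at this
        rw [this] at hjS
        exact hi1 hjS
      have hadj := adj_move_left hsx hnpred
      set S' : Finset ℕ := insert (i - 1) (S.erase i) with hS'
      have hi1e : i - 1 ∉ S.erase i := fun h => hi1 (Finset.mem_of_mem_erase h)
      have heq : insert (s - 1) ((S.image f).erase s) = S'.image f := by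
        rw [hS', Finset.image_insert, ← hpred]
        congr 1
        ext u
        simp only [Finset.mem_erase, Finset.mem_image]
        constructor
        · rintro ⟨hne, j, hjS, rfl⟩
          refine ⟨j, ⟨?_, hjS⟩, rfl⟩
          intro hji
          subst hji
          exact hne rfl
        · rintro ⟨j, hjE, rfl⟩
          obtain ⟨hji, hjS⟩ := hjE
          refine ⟨?_, j, hjS, rfl⟩
          intro h
          have := congrArg (coord b) h
          rw [hfcoord j (by have := hbd j hjS; omega), hs, hfcoord i (by omega)] at this
          exact hji this
      rw [heq] at hadj
      have hsum' : ∑ j ∈ S', j = n - 1 := by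
        rw [hS', Finset.sum_insert hi1e]
        have := Finset.sum_erase_add S id hiS
        simp only [id] at this
        omega
      have hcard' : S'.card = N := by
        rw [hS', Finset.card_insert_of_notMem hi1e, Finset.card_erase_of_mem hiS, hcard]
        have : 1 ≤ N := by
          rw [← hcard]
          exact Finset.card_pos.2 ⟨i, hiS⟩
        omega
      have hbd' : ∀ j ∈ S', j < L - 1 := by
        intro j hj
        rcases Finset.mem_insert.1 hj with rfl | hj
        · omega
        · exact hbd j (Finset.mem_of_mem_erase hj)
      have hn1 : 1 ≤ n := by
        rw [← hsum]
        exact le_trans (show (1:ℕ) ≤ i by omega)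
          (Finset.single_le_sum (f := fun j => j) (fun _ _ => Nat.zero_le _) hiS)
      have hreach := ih (n - 1) (by omega) S' hsum' hcard' hbd'
      exact hadj.reachable.trans hreach

lemma reach_to_itv {N : ℕ} {x : Finset (Fin L)} {z : Fin L} (hz : z ∉ x)
    (hcard : x.card = N) (hNL : N < L) :
    (hcGraph L).Reachable x (itv (z + 1) N) := by
  set b := z + 1 with hb
  set S : Finset ℕ := x.image (coord b) with hS
  have hbd : ∀ i ∈ S, i < L - 1 := by
    intro i hi
    obtain ⟨s, hsx, rfl⟩ := Finset.mem_image.1 hi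
    have h1 := coord_lt b s
    rcases eq_or_ne (coord b s) (L - 1) with h | h
    · exfalso
      have : s = z := coord_inj (by rw [h, hb, coord_self_pred])
      rw [this] at hsx
      exact hz hsx
    · omega
  have hxS : x = S.image (fun i : ℕ => b + (i : Fin L)) := by
    ext u
    rw [hS, Finset.image_image, Finset.mem_image]
    constructor
    · intro hu
      exact ⟨u, hu, by simp only [Function.comp]; exact (eq_add_coord b u).symm⟩
    · rintro ⟨v, hv, rfl⟩
      simp only [Function.comp]
      rwa [← eq_add_coord b v]
  have hcardS : S.card = N := by
    rw [hS, Finset.card_image_of_injOn (fun u _ v _ h => coord_inj h), hcard]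
  have := reach_S N hNL b (∑ i ∈ S, i) S rfl hcardS hbd
  rwa [← hxS] at this

lemma reach_any {N : ℕ} {x : Finset (Fin L)} (hcard : x.card = N) (hNL : N < L) (a : Fin L) :
    (hcGraph L).Reachable x (itv a N) := by
  have hne : x ≠ Finset.univ := by
    intro h
    rw [h, Finset.card_univ, Fintype.card_fin] at hcard
    omega
  obtain ⟨z, hz⟩ : ∃ z, z ∉ x := by
    by_contra hc
    push_neg at hc
    exact hne (Finset.eq_univ_iff_forall.2 hc)
  exact (reach_to_itv hz hcard hNL).trans (reach_itv hNL _ a)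

/-- weight profile: distance-to-boundary inside, distance-to-interval outside -/
def Fw (L N j : ℕ) : ℕ := if j < N then min j (N - 1 - j) else min (j - (N - 1)) (L - j)

/-- the Lipschitz potential -/
def Phi (N : ℕ) (a : Fin L) (x : Finset (Fin L)) : ℕ :=
  ∑ s ∈ symmDiff x (itv a N), Fw L N (coord a s)

lemma Phi_itv (N : ℕ) (a : Fin L) : Phi N a (itv a N) = 0 := by
  rw [Phi, symmDiff_self]
  rfl

lemma Fw_pos_outside {N p : ℕ} (hN1 : 1 ≤ N) (hp : N ≤ p) (hpL : p < L) : 1 ≤ Fw L N p := by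
  rw [Fw, if_neg (by omega)]
  exact le_min (by omega) (by omega)
lemma Phi_pos {N : ℕ} {a : Fin L} {x : Finset (Fin L)} (hcard : x.card = N)
    (hne : x ≠ itv a N) (hNL : N < L) : 1 ≤ Phi N a x := by
  have hsub : ¬ (x ⊆ itv a N) := by
    intro hsub
    exact hne (Finset.eq_of_subset_of_card_le hsub (by rw [card_itv a (le_of_lt hNL), hcard]))
  rcases Nat.eq_zero_or_pos N with rfl | hN1
  · exfalso
    apply hne
    rw [Finset.card_eq_zero.1 hcard, itv_eq]
    simp
  obtain ⟨s, hsx, hsc⟩ := Finset.not_subset.1 hsub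
  have hmem : s ∈ symmDiff x (itv a N) := Finset.mem_symmDiff.2 (Or.inl ⟨hsx, hsc⟩)
  have hcoord : N ≤ coord a s := by
    by_contra h
    exact hsc ((mem_itv (le_of_lt hNL)).2 (by omega))
  calc 1 ≤ Fw L N (coord a s) := Fw_pos_outside hN1 hcoord (coord_lt a s)
    _ ≤ Phi N a x := Finset.single_le_sum (f := fun s => Fw L N (coord a s))
        (fun _ _ => Nat.zero_le _) hmem

lemma w_lip {N : ℕ} (hN1 : 1 ≤ N) (hNL : N < L) (a j : Fin L)
    (hiff : (coord a j < N ↔ coord a (j + 1) < N)) :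
    Fw L N (coord a (j + 1)) ≤ Fw L N (coord a j) + 1 ∧
      Fw L N (coord a j) ≤ Fw L N (coord a (j + 1)) + 1 := by
  have h1 := coord_add_one a j
  have h2 := coord_lt a j
  have h3 := coord_lt a (j + 1)
  rcases eq_or_ne (coord a j) (L - 1) with h | h
  · rw [if_pos h] at h1
    rw [Fw, Fw, h1, h]
    split_ifs <;> omega
  · rw [if_neg h] at h1
    rw [Fw, Fw, h1]
    split_ifs <;> omega

lemma w_bdry {N : ℕ} (hN1 : 1 ≤ N) (hNL : N < L) (a j : Fin L)
    (hx : ¬ (coord a j < N ↔ coord a (j + 1) < N)) :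
    Fw L N (coord a j) + Fw L N (coord a (j + 1)) ≤ 1 := by
  have h1 := coord_add_one a j
  have h2 := coord_lt a j
  have h3 := coord_lt a (j + 1)
  rcases eq_or_ne (coord a j) (L - 1) with h | h
  · rw [if_pos h] at h1
    rw [Fw, Fw, h1, h]
    split_ifs <;> omega
  · rw [if_neg h] at h1
    rw [Fw, Fw, h1]
    split_ifs <;> omega

lemma Phi_lip {N : ℕ} (hN1 : 1 ≤ N) (hNL : N < L) (hL2 : 2 ≤ L) (a : Fin L)
    {u v : Finset (Fin L)} (hadj : (hcGraph L).Adj u v) :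
    Phi N a v ≤ Phi N a u + 1 := by
  obtain ⟨hcard, j, hsd⟩ := hadj
  rw [show ((1:ℕ) : Fin L) = (1 : Fin L) by simp] at hsd
  set c : Finset (Fin L) := itv a N with hc
  set w : Fin L → ℕ := fun s => Fw L N (coord a s) with hw
  have hne : j ≠ j + 1 := by
    intro h
    have h0 : coord j j = 0 := by rw [coord]; simp
    have h1 : coord j (j + 1) = 1 := by
      rw [coord_add_one', h0, Nat.mod_eq_of_lt (by omega)]
    rw [← h, h0] at h1
    omega
  set P : Finset (Fin L) := {j, j + 1} with hP
  have hjP : j ∈ P := Finset.mem_insert_self _ _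
  have hkP : j + 1 ∈ P := by rw [hP]; simp
  have hmemj : j ∈ symmDiff u v := by rw [hsd]; exact hjP
  have hmemk : j + 1 ∈ symmDiff u v := by rw [hsd]; exact hkP
  -- the move goes one way
  have hdir : (j ∈ u ∧ j + 1 ∉ u ∧ j ∉ v ∧ j + 1 ∈ v) ∨
      (j ∉ u ∧ j + 1 ∈ u ∧ j ∈ v ∧ j + 1 ∉ v) := by
    have hcsd : (u \ v).card = 1 ∧ (v \ u).card = 1 := by
      have h1 : (u \ v).card + (u ∩ v).card = u.card := Finset.card_sdiff_add_card_inter u v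
      have h2 : (v \ u).card + (v ∩ u).card = v.card := Finset.card_sdiff_add_card_inter v u
      rw [Finset.inter_comm v u] at h2
      have hdisj : Disjoint (u \ v) (v \ u) := disjoint_sdiff_sdiff
      have hunion : (u \ v) ∪ (v \ u) = P := by
        rw [← hsd, symmDiff_def]
        rfl
      have hPcard : P.card = 2 := Finset.card_pair hne
      have := Finset.card_union_of_disjoint hdisj
      rw [hunion, hPcard] at this
      omega
    rcases Finset.mem_symmDiff.1 hmemj with ⟨hju, hjv⟩ | ⟨hjv, hju⟩
    · rcases Finset.mem_symmDiff.1 hmemk with ⟨hku, hkv⟩ | ⟨hkv, hku⟩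
      · exfalso
        have hsub : P ⊆ u \ v := by
          intro t ht
          rcases Finset.mem_insert.1 ht with rfl | ht
          · exact Finset.mem_sdiff.2 ⟨hju, hjv⟩
          · rw [Finset.mem_singleton.1 ht]
            exact Finset.mem_sdiff.2 ⟨hku, hkv⟩
        have := Finset.card_le_card hsub
        rw [Finset.card_pair hne] at this
        omega
      · exact Or.inl ⟨hju, hku, hjv, hkv⟩
    · rcases Finset.mem_symmDiff.1 hmemk with ⟨hku, hkv⟩ | ⟨hkv, hku⟩
      · exact Or.inr ⟨hju, hku, hjv, hkv⟩
      · exfalso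
        have hsub : P ⊆ v \ u := by
          intro t ht
          rcases Finset.mem_insert.1 ht with rfl | ht
          · exact Finset.mem_sdiff.2 ⟨hjv, hju⟩
          · rw [Finset.mem_singleton.1 ht]
            exact Finset.mem_sdiff.2 ⟨hkv, hku⟩
        have := Finset.card_le_card hsub
        rw [Finset.card_pair hne] at this
        omega
  set A : Finset (Fin L) := symmDiff u c with hA
  have hBA : symmDiff v c = symmDiff A P := by
    calc symmDiff v c = symmDiff (symmDiff u (symmDiff u v)) c := by
          rw [symmDiff_symmDiff_cancel_left]
      _ = symmDiff (symmDiff u c) (symmDiff u v) := symmDiff_right_comm u (symmDiff u v) c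
      _ = symmDiff A P := by rw [hsd, hA]
  have hsumB : Phi N a v = ∑ s ∈ A \ P, w s + ∑ s ∈ P \ A, w s := by
    rw [Phi, ← hc, hBA, symmDiff_def]
    exact Finset.sum_union disjoint_sdiff_sdiff
  have hsumA : Phi N a u = ∑ s ∈ A \ P, w s + ∑ s ∈ A ∩ P, w s := by
    rw [Phi, ← hc, ← hA, ← Finset.sum_inter_add_sum_sdiff A P w]
    omega
  suffices hkey : ∑ s ∈ P \ A, w s ≤ ∑ s ∈ A ∩ P, w s + 1 by omega
  have hmemitv : ∀ t : Fin L, t ∈ c ↔ coord a t < N := fun t => mem_itv (le_of_lt hNL)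
  by_cases hjA : j ∈ A <;> by_cases hkA : j + 1 ∈ A
  · -- both flipped out
    have hPA : P \ A = ∅ := by
      rw [Finset.sdiff_eq_empty_iff_subset]
      intro t ht
      rcases Finset.mem_insert.1 ht with rfl | ht
      · exact hjA
      · rw [Finset.mem_singleton.1 ht]; exact hkA
    rw [hPA, Finset.sum_empty]
    omega
  · -- j ∈ A, j+1 ∉ A : replace j by j+1
    have hPA : P \ A = {j + 1} := by
      ext t
      simp only [Finset.mem_sdiff, hP, Finset.mem_insert, Finset.mem_singleton]
      constructor
      · rintro ⟨rfl | rfl, hta⟩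
        · exact absurd hjA hta
        · rfl
      · rintro rfl
        exact ⟨Or.inr rfl, hkA⟩
    have hAP : A ∩ P = {j} := by
      ext t
      simp only [Finset.mem_inter, hP, Finset.mem_insert, Finset.mem_singleton]
      constructor
      · rintro ⟨hta, rfl | rfl⟩
        · rfl
        · exact absurd hta hkA
      · rintro rfl
        exact ⟨hjA, Or.inl rfl⟩
    rw [hPA, hAP, Finset.sum_singleton, Finset.sum_singleton]
    have hjArw := hjA
    have hkArw := hkA
    rw [hA, Finset.mem_symmDiff] at hjArw hkArw
    have hciff : (coord a j < N ↔ coord a (j + 1) < N) := by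
      rw [← hmemitv j, ← hmemitv (j + 1)]
      rcases hdir with ⟨h1, h2, h3, h4⟩ | ⟨h1, h2, h3, h4⟩ <;> tauto
    exact (w_lip hN1 hNL a j hciff).1
  · -- j ∉ A, j+1 ∈ A
    have hPA : P \ A = {j} := by
      ext t
      simp only [Finset.mem_sdiff, hP, Finset.mem_insert, Finset.mem_singleton]
      constructor
      · rintro ⟨rfl | rfl, hta⟩
        · rfl
        · exact absurd hkA hta
      · rintro rfl
        exact ⟨Or.inl rfl, hjA⟩
    have hAP : A ∩ P = {j + 1} := by
      ext t
      simp only [Finset.mem_inter, hP, Finset.mem_insert, Finset.mem_singleton]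
      constructor
      · rintro ⟨hta, rfl | rfl⟩
        · exact absurd hta hjA
        · rfl
      · rintro rfl
        exact ⟨hkA, Or.inr rfl⟩
    rw [hPA, hAP, Finset.sum_singleton, Finset.sum_singleton]
    have hjArw := hjA
    have hkArw := hkA
    rw [hA, Finset.mem_symmDiff] at hjArw hkArw
    have hciff : (coord a j < N ↔ coord a (j + 1) < N) := by
      rw [← hmemitv j, ← hmemitv (j + 1)]
      rcases hdir with ⟨h1, h2, h3, h4⟩ | ⟨h1, h2, h3, h4⟩ <;> tauto
    exact (w_lip hN1 hNL a j hciff).2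
  · -- both flipped in
    have hPA : P \ A = P := by
      rw [Finset.sdiff_eq_self_iff_disjoint]
      rw [Finset.disjoint_left]
      intro t ht
      rcases Finset.mem_insert.1 ht with rfl | ht
      · exact hjA
      · rw [Finset.mem_singleton.1 ht]; exact hkA
    have hAP : A ∩ P = ∅ := by
      rw [← Finset.disjoint_iff_inter_eq_empty, Finset.disjoint_right]
      intro t ht
      rcases Finset.mem_insert.1 ht with rfl | ht
      · exact hjA
      · rw [Finset.mem_singleton.1 ht]; exact hkA
    rw [hPA, hAP, Finset.sum_empty, hP, Finset.sum_pair hne]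
    have hjArw := hjA
    have hkArw := hkA
    rw [hA, Finset.mem_symmDiff] at hjArw hkArw
    have hcx : ¬ (coord a j < N ↔ coord a (j + 1) < N) := by
      rw [← hmemitv j, ← hmemitv (j + 1)]
      rcases hdir with ⟨h1, h2, h3, h4⟩ | ⟨h1, h2, h3, h4⟩ <;> tauto
    have := w_bdry hN1 hNL a j hcx
    have hw1 : w j = Fw L N (coord a j) := rfl
    have hw2 : w (j + 1) = Fw L N (coord a (j + 1)) := rfl
    omega

lemma Phi_le_walk {N : ℕ} (hN1 : 1 ≤ N) (hNL : N < L) (hL2 : 2 ≤ L) (a : Fin L) :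
    ∀ {y z : Finset (Fin L)} (p : (hcGraph L).Walk y z), Phi N a y ≤ Phi N a z + p.length := by
  intro y z p
  induction p with
  | nil => simp
  | cons h p ih =>
    rw [SimpleGraph.Walk.length_cons]
    have h1 := Phi_lip hN1 hNL hL2 a h.symm
    omega

lemma Phi_le_dist {N : ℕ} (hN1 : 1 ≤ N) (hNL : N < L) (hL2 : 2 ≤ L) (a : Fin L)
    {x : Finset (Fin L)} (h : (hcGraph L).Reachable x (itv a N)) :
    Phi N a x ≤ (hcGraph L).dist x (itv a N) := by
  obtain ⟨p, hp⟩ := h.exists_walk_length_eq_dist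
  calc Phi N a x ≤ Phi N a (itv a N) + p.length := Phi_le_walk hN1 hNL hL2 a p
    _ = p.length := by rw [Phi_itv]; omega
    _ = _ := hp

/-! ### Counting -/

lemma geom_le_two (n : ℕ) : ∑ v ∈ Finset.range n, ((1:ℝ)/2) ^ v ≤ 2 := by
  rw [geom_sum_eq (by norm_num)]
  have h := pow_nonneg (by norm_num : (0:ℝ) ≤ 1/2) n
  have h2 := pow_le_one₀ (by norm_num : (0:ℝ) ≤ 1/2) (by norm_num : (1:ℝ)/2 ≤ 1) (n := n)
  rw [div_le_iff_of_neg (by norm_num : (1:ℝ)/2 - 1 < 0)]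
  nlinarith

lemma sum_pow_ge_one_le_one {S : Finset ℕ} (h1 : ∀ v ∈ S, 1 ≤ v) :
    ∑ v ∈ S, ((1:ℝ)/2) ^ v ≤ 1 := by
  classical
  set M := S.sup id with hM
  have hsub : S ⊆ (Finset.range (M + 1)).erase 0 := by
    intro v hv
    rw [Finset.mem_erase, Finset.mem_range]
    exact ⟨by have := h1 v hv; omega, Nat.lt_succ_of_le (Finset.le_sup (f := id) hv)⟩
  have hle : ∑ v ∈ S, ((1:ℝ)/2) ^ v ≤ ∑ v ∈ (Finset.range (M + 1)).erase 0, ((1:ℝ)/2) ^ v :=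
    Finset.sum_le_sum_of_subset_of_nonneg hsub (fun v _ _ => pow_nonneg (by norm_num) v)
  have herase : ∑ v ∈ (Finset.range (M + 1)).erase 0, ((1:ℝ)/2) ^ v + ((1:ℝ)/2) ^ 0 =
      ∑ v ∈ Finset.range (M + 1), ((1:ℝ)/2) ^ v :=
    Finset.sum_erase_add _ _ (by simp)
  have hg := geom_le_two (M + 1)
  simp only [pow_zero] at herase
  linarith

lemma sum_pow_inj_le_one {T : Finset ℕ} {e : ℕ → ℕ} (he : Set.InjOn e T)
    (h1 : ∀ j ∈ T, 1 ≤ e j) :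
    ∑ j ∈ T, ((1:ℝ)/2) ^ (e j) ≤ 1 := by
  rw [← Finset.sum_image (f := fun v => ((1:ℝ)/2) ^ v) (g := e)
    (fun a ha b hb h => he ha hb h)]
  exact sum_pow_ge_one_le_one (by
    intro v hv
    obtain ⟨j, hj, rfl⟩ := Finset.mem_image.1 hv
    exact h1 j hj)

lemma min_pow_le {a b : ℕ} : ((1:ℝ)/2) ^ (min a b) ≤ ((1:ℝ)/2) ^ a + ((1:ℝ)/2) ^ b := by
  rcases min_choice a b with h | h <;> rw [h]
  · nlinarith [pow_nonneg (by norm_num : (0:ℝ) ≤ 1/2) b]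
  · nlinarith [pow_nonneg (by norm_num : (0:ℝ) ≤ 1/2) a]

lemma sum_Fw_le (N : ℕ) :
    ∑ j ∈ (Finset.range L).filter (fun j => Fw L N j ≠ 0), ((1:ℝ)/2) ^ (Fw L N j) ≤ 4 := by
  set T := (Finset.range L).filter (fun j => Fw L N j ≠ 0) with hT
  have hsplit := Finset.sum_filter_add_sum_filter_not T (fun j => j < N)
    (fun j => ((1:ℝ)/2) ^ (Fw L N j))
  set T1 := T.filter (fun j => j < N) with hT1
  set T2 := T.filter (fun j => ¬ j < N) with hT2
  have hmemT : ∀ j ∈ T, j < L ∧ Fw L N j ≠ 0 := by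
    intro j hj
    rw [hT, Finset.mem_filter, Finset.mem_range] at hj
    exact hj
  have hbd1 : ∑ j ∈ T1, ((1:ℝ)/2) ^ (Fw L N j) ≤ 2 := by
    have hstep : ∀ j ∈ T1, ((1:ℝ)/2) ^ (Fw L N j) ≤ ((1:ℝ)/2)^j + ((1:ℝ)/2)^(N - 1 - j) := by
      intro j hj
      rw [hT1, Finset.mem_filter] at hj
      have := hmemT j hj.1
      rw [Fw, if_pos hj.2]
      exact min_pow_le
    calc ∑ j ∈ T1, ((1:ℝ)/2) ^ (Fw L N j)
        ≤ ∑ j ∈ T1, (((1:ℝ)/2)^j + ((1:ℝ)/2)^(N - 1 - j)) := Finset.sum_le_sum hstep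
      _ = ∑ j ∈ T1, ((1:ℝ)/2)^j + ∑ j ∈ T1, ((1:ℝ)/2)^(N - 1 - j) := Finset.sum_add_distrib
      _ ≤ 1 + 1 := by
          gcongr
          · apply sum_pow_inj_le_one (fun p _ q _ h => h)
            intro j hj
            rw [hT1, Finset.mem_filter] at hj
            obtain ⟨hjT, hjN⟩ := hj
            have h2 := (hmemT j hjT).2
            rw [Fw, if_pos hjN] at h2
            omega
          · apply sum_pow_inj_le_one
            · intro p hp q hq h
              rw [hT1, Finset.mem_coe, Finset.mem_filter] at hp hq
              have h' : N - 1 - p = N - 1 - q := h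
              have hpN := hp.2
              have hqN := hq.2
              omega
            · intro j hj
              rw [hT1, Finset.mem_filter] at hj
              obtain ⟨hjT, hjN⟩ := hj
              have h2 := (hmemT j hjT).2
              rw [Fw, if_pos hjN] at h2
              omega
      _ = 2 := by norm_num
  have hbd2 : ∑ j ∈ T2, ((1:ℝ)/2) ^ (Fw L N j) ≤ 2 := by
    have hstep : ∀ j ∈ T2, ((1:ℝ)/2) ^ (Fw L N j) ≤ ((1:ℝ)/2)^(j - (N-1)) + ((1:ℝ)/2)^(L - j) := by
      intro j hj
      rw [hT2, Finset.mem_filter] at hj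
      rw [Fw, if_neg hj.2]
      exact min_pow_le
    calc ∑ j ∈ T2, ((1:ℝ)/2) ^ (Fw L N j)
        ≤ ∑ j ∈ T2, (((1:ℝ)/2)^(j - (N-1)) + ((1:ℝ)/2)^(L - j)) := Finset.sum_le_sum hstep
      _ = ∑ j ∈ T2, ((1:ℝ)/2)^(j - (N-1)) + ∑ j ∈ T2, ((1:ℝ)/2)^(L - j) := Finset.sum_add_distrib
      _ ≤ 1 + 1 := by
          gcongr
          · apply sum_pow_inj_le_one
            · intro p hp q hq h
              rw [hT2, Finset.mem_coe, Finset.mem_filter] at hp hq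
              have := (hmemT p hp.1).1
              have := (hmemT q hq.1).1
              have h' : p - (N - 1) = q - (N - 1) := h
              have hpN := hp.2
              have hqN := hq.2
              omega
            · intro j hj
              rw [hT2, Finset.mem_filter] at hj
              obtain ⟨hjT, hjN⟩ := hj
              have h2 := (hmemT j hjT).2
              rw [Fw, if_neg hjN] at h2
              omega
          · apply sum_pow_inj_le_one
            · intro p hp q hq h
              rw [hT2, Finset.mem_coe, Finset.mem_filter] at hp hq
              have := (hmemT p hp.1).1
              have := (hmemT q hq.1).1
              have h' : L - p = L - q := h
              omega
            · intro j hj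
              rw [hT2, Finset.mem_filter] at hj
              obtain ⟨hjT, hjN⟩ := hj
              have h2 := (hmemT j hjT).2
              rw [Fw, if_neg hjN] at h2
              omega
      _ = 2 := by norm_num
  rw [← hsplit]
  linarith

lemma card_Fw_zero (N : ℕ) :
    ((Finset.range L).filter (fun j => Fw L N j = 0)).card ≤ 2 := by
  have hsub : (Finset.range L).filter (fun j => Fw L N j = 0) ⊆ {0, N - 1} := by
    intro j hj
    rw [Finset.mem_filter, Finset.mem_range] at hj
    obtain ⟨hjL, hj0⟩ := hj
    rw [Fw] at hj0
    simp only [Finset.mem_insert, Finset.mem_singleton]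
    by_cases h : j < N
    · rw [if_pos h] at hj0
      omega
    · rw [if_neg h] at hj0
      omega
  calc _ ≤ ({0, N - 1} : Finset ℕ).card := Finset.card_le_card hsub
    _ ≤ 2 := Finset.card_insert_le _ _ |>.trans (by simp)

lemma exp_four_le : Real.exp 4 ≤ 64 := by
  have h1 : Real.exp 4 = (Real.exp 1) ^ 4 := by
    rw [show (4:ℝ) = ((4:ℕ):ℝ) by norm_num, ← Real.exp_one_pow]
  rw [h1]
  have h2 := Real.exp_one_lt_d9
  have h3 : (0:ℝ) ≤ Real.exp 1 := Real.exp_nonneg 1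
  calc (Real.exp 1)^4 ≤ (2.7182818286:ℝ)^4 := pow_le_pow_left₀ h3 h2.le 4
    _ ≤ 64 := by norm_num

lemma prod_Fw_le (N : ℕ) :
    ∏ j ∈ Finset.range L, (((1:ℝ)/2) ^ (Fw L N j) + 1) ≤ 256 := by
  have hgnn : ∀ j : ℕ, (0:ℝ) ≤ (if Fw L N j = 0 then 2 else Real.exp (((1:ℝ)/2) ^ (Fw L N j))) := by
    intro j
    split_ifs
    · norm_num
    · exact Real.exp_nonneg _
  have h1 : ∏ j ∈ Finset.range L, (((1:ℝ)/2) ^ (Fw L N j) + 1)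
      ≤ ∏ j ∈ Finset.range L, (if Fw L N j = 0 then 2 else Real.exp (((1:ℝ)/2) ^ (Fw L N j))) := by
    apply Finset.prod_le_prod
    · intro j _
      have := pow_nonneg (by norm_num : (0:ℝ) ≤ 1/2) (Fw L N j)
      linarith
    · intro j _
      by_cases h : Fw L N j = 0
      · rw [if_pos h, h]
        norm_num
      · rw [if_neg h]
        exact Real.add_one_le_exp _
  have h2 : ∏ j ∈ Finset.range L, (if Fw L N j = 0 then 2 else Real.exp (((1:ℝ)/2) ^ (Fw L N j))) =
      (∏ j ∈ (Finset.range L).filter (fun j => Fw L N j = 0),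
          (if Fw L N j = 0 then (2:ℝ) else Real.exp (((1:ℝ)/2) ^ (Fw L N j)))) *
        ∏ j ∈ (Finset.range L).filter (fun j => ¬ Fw L N j = 0),
          (if Fw L N j = 0 then (2:ℝ) else Real.exp (((1:ℝ)/2) ^ (Fw L N j))) :=
    (Finset.prod_filter_mul_prod_filter_not _ _ _).symm
  have h3 : ∏ j ∈ (Finset.range L).filter (fun j => Fw L N j = 0),
      (if Fw L N j = 0 then (2:ℝ) else Real.exp (((1:ℝ)/2) ^ (Fw L N j))) ≤ 4 := by
    have hval : ∏ j ∈ (Finset.range L).filter (fun j => Fw L N j = 0),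
        (if Fw L N j = 0 then (2:ℝ) else Real.exp (((1:ℝ)/2) ^ (Fw L N j))) =
        2 ^ ((Finset.range L).filter (fun j => Fw L N j = 0)).card := by
      rw [← Finset.prod_const]
      apply Finset.prod_congr rfl
      intro j hj
      rw [Finset.mem_filter] at hj
      rw [if_pos hj.2]
    rw [hval]
    calc (2:ℝ) ^ _ ≤ 2 ^ 2 := by
          apply pow_le_pow_right₀ (by norm_num)
          exact card_Fw_zero N
      _ = 4 := by norm_num
  have h4 : ∏ j ∈ (Finset.range L).filter (fun j => ¬ Fw L N j = 0),
      (if Fw L N j = 0 then (2:ℝ) else Real.exp (((1:ℝ)/2) ^ (Fw L N j))) ≤ 64 := by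
    have hval : ∏ j ∈ (Finset.range L).filter (fun j => ¬ Fw L N j = 0),
        (if Fw L N j = 0 then (2:ℝ) else Real.exp (((1:ℝ)/2) ^ (Fw L N j))) =
        Real.exp (∑ j ∈ (Finset.range L).filter (fun j => ¬ Fw L N j = 0),
          ((1:ℝ)/2) ^ (Fw L N j)) := by
      rw [Real.exp_sum]
      apply Finset.prod_congr rfl
      intro j hj
      rw [Finset.mem_filter] at hj
      rw [if_neg hj.2]
    rw [hval]
    calc Real.exp _ ≤ Real.exp 4 := Real.exp_le_exp.2 (sum_Fw_le N)
      _ ≤ 64 := exp_four_le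
  calc ∏ j ∈ Finset.range L, (((1:ℝ)/2) ^ (Fw L N j) + 1) ≤ _ := h1
    _ = _ * _ := h2
    _ ≤ 4 * 64 := by
        apply mul_le_mul h3 h4 (Finset.prod_nonneg (fun j _ => hgnn j)) (by norm_num)
    _ = 256 := by norm_num

lemma sum_q_Phi_le {N : ℕ} (a : Fin L) :
    ∑ x ∈ Finset.powersetCard N (Finset.univ : Finset (Fin L)), ((1:ℝ)/2) ^ (Phi N a x) ≤ 256 := by
  classical
  set c : Finset (Fin L) := itv a N with hc
  set g : Fin L → ℝ := fun s => ((1:ℝ)/2) ^ (Fw L N (coord a s)) with hg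
  have hq : ∀ x : Finset (Fin L), ((1:ℝ)/2) ^ (Phi N a x) = ∏ s ∈ symmDiff x c, g s := by
    intro x
    rw [Phi, ← hc, Finset.prod_pow_eq_pow_sum]
  have hrw : ∑ x ∈ Finset.powersetCard N (Finset.univ : Finset (Fin L)), ((1:ℝ)/2) ^ (Phi N a x)
      = ∑ T ∈ (Finset.powersetCard N (Finset.univ : Finset (Fin L))).image
          (fun x => symmDiff x c), ∏ s ∈ T, g s := by
    rw [Finset.sum_image]
    · exact Finset.sum_congr rfl (fun x _ => hq x)
    · intro x _ y _ h
      have := congrArg (fun t => symmDiff t c) h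
      simpa [symmDiff_symmDiff_cancel_right] using this
  rw [hrw]
  have hsub : (Finset.powersetCard N (Finset.univ : Finset (Fin L))).image
      (fun x => symmDiff x c) ⊆ (Finset.univ : Finset (Fin L)).powerset := by
    intro T _
    exact Finset.mem_powerset.2 (Finset.subset_univ T)
  have hmono : ∑ T ∈ (Finset.powersetCard N (Finset.univ : Finset (Fin L))).image
        (fun x => symmDiff x c), ∏ s ∈ T, g s
      ≤ ∑ T ∈ (Finset.univ : Finset (Fin L)).powerset, ∏ s ∈ T, g s :=
    Finset.sum_le_sum_of_subset_of_nonneg hsub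
      (fun T _ _ => Finset.prod_nonneg (fun s _ => pow_nonneg (by norm_num) _))
  have hprod : ∑ T ∈ (Finset.univ : Finset (Fin L)).powerset, ∏ s ∈ T, g s
      = ∏ s : Fin L, (g s + 1) := by
    rw [Finset.prod_add]
    simp
  have hreindex : ∏ s : Fin L, (g s + 1) = ∏ j ∈ Finset.range L, (((1:ℝ)/2) ^ (Fw L N j) + 1) := by
    have e1 : ∏ s : Fin L, (g s + 1) = ∏ t : Fin L, (((1:ℝ)/2) ^ (Fw L N t.val) + 1) := by
      apply Fintype.prod_equiv (Equiv.subRight a)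
      intro s
      rfl
    rw [e1]
    exact Fin.prod_univ_eq_prod_range (fun j => ((1:ℝ)/2) ^ (Fw L N j) + 1) L
  calc _ ≤ _ := hmono
    _ = _ := hprod
    _ = _ := hreindex
    _ ≤ 256 := prod_Fw_le N

lemma per_droplet {N : ℕ} (hN : 2 * N < L) (μ : ℝ) (hμ : Real.log 2 ≤ μ) (m : Fin L) :
    ∑ x ∈ Finset.powersetCard N (Finset.univ : Finset (Fin L)),
      Real.exp (-μ * (dN L x (droplet L N m) : ℝ)) ≤ 1 + 2 ^ 9 * Real.exp (-μ) := by
  classical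
  have hNL : N < L := by omega
  set a : Fin L := m - (((N - 1) / 2 : ℕ) : Fin L) with ha
  have hdrop : droplet L N m = itv a N := droplet_eq_itv L N m
  set c : Finset (Fin L) := itv a N with hc
  set P : Finset (Finset (Fin L)) := Finset.powersetCard N (Finset.univ : Finset (Fin L)) with hP
  set f : Finset (Fin L) → ℝ := fun x => Real.exp (-μ * (dN L x (droplet L N m) : ℝ)) with hf
  have hcP : c ∈ P := Finset.mem_powersetCard_univ.2 (card_itv a (le_of_lt hNL))
  have hsplit : f c + ∑ x ∈ P.erase c, f x = ∑ x ∈ P, f x := Finset.add_sum_erase P f hcP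
  have hfc : f c = 1 := by
    rw [hf]
    dsimp only
    rw [hdrop]
    have : dN L c c = 0 := SimpleGraph.dist_self
    rw [this]
    norm_num
  have hexpneg : Real.exp (-μ) ≤ 1/2 := by
    calc Real.exp (-μ) ≤ Real.exp (-Real.log 2) := Real.exp_le_exp.2 (by linarith)
      _ = 1/2 := by rw [Real.exp_neg, Real.exp_log] <;> norm_num
  have hperx : ∀ x ∈ P.erase c, f x ≤ 2 * Real.exp (-μ) * ((1:ℝ)/2) ^ (Phi N a x) := by
    intro x hx
    have hxc : x ≠ c := (Finset.mem_erase.1 hx).1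
    have hxP : x ∈ P := Finset.mem_of_mem_erase hx
    have hcard : x.card = N := Finset.mem_powersetCard_univ.1 hxP
    have hN1 : 1 ≤ N := by
      by_contra h
      have hN0 : N = 0 := by omega
      apply hxc
      have hx0 : x = ∅ := Finset.card_eq_zero.1 (by rw [hcard, hN0])
      rw [hx0, hc, hN0, itv_eq]
      simp
    have hL2 : 2 ≤ L := by omega
    have hreach : (hcGraph L).Reachable x c := reach_any hcard hNL a
    have hd1 : 1 ≤ (hcGraph L).dist x c := hreach.pos_dist_of_ne hxc
    have hPhid : Phi N a x ≤ (hcGraph L).dist x c := Phi_le_dist hN1 hNL hL2 a hreach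
    have hPhi1 : 1 ≤ Phi N a x := Phi_pos hcard hxc hNL
    set d : ℕ := (hcGraph L).dist x c with hd
    set p : ℕ := Phi N a x - 1 with hp
    have hpeq : Phi N a x = p + 1 := by omega
    have hdN : dN L x (droplet L N m) = d := by rw [hdrop]; exact hd.symm
    rw [hf]
    dsimp only
    rw [hdN]
    have hdk : d = (d - 1) + 1 := by omega
    calc Real.exp (-μ * (d:ℝ))
        = Real.exp (((d-1 : ℕ):ℝ) * (-μ)) * Real.exp (-μ) := by
          rw [← Real.exp_add]
          congr 1
          rw [hdk]
          push_cast
          ring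
      _ ≤ ((1:ℝ)/2) ^ (d-1) * Real.exp (-μ) := by
          apply mul_le_mul_of_nonneg_right _ (Real.exp_nonneg _)
          rw [Real.exp_nat_mul]
          exact pow_le_pow_left₀ (Real.exp_nonneg _) hexpneg _
      _ ≤ ((1:ℝ)/2) ^ p * Real.exp (-μ) := by
          apply mul_le_mul_of_nonneg_right _ (Real.exp_nonneg _)
          apply pow_le_pow_of_le_one (by norm_num) (by norm_num)
          omega
      _ = 2 * Real.exp (-μ) * ((1:ℝ)/2) ^ (Phi N a x) := by
          rw [hpeq, pow_succ]
          ring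
  have hsum2 : ∑ x ∈ P.erase c, f x ≤ 2 ^ 9 * Real.exp (-μ) := by
    calc ∑ x ∈ P.erase c, f x
        ≤ ∑ x ∈ P.erase c, 2 * Real.exp (-μ) * ((1:ℝ)/2) ^ (Phi N a x) :=
          Finset.sum_le_sum hperx
      _ = 2 * Real.exp (-μ) * ∑ x ∈ P.erase c, ((1:ℝ)/2) ^ (Phi N a x) := by
          rw [Finset.mul_sum]
      _ ≤ 2 * Real.exp (-μ) * ∑ x ∈ P, ((1:ℝ)/2) ^ (Phi N a x) := by
          apply mul_le_mul_of_nonneg_left _ (by positivity)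
          exact Finset.sum_le_sum_of_subset_of_nonneg (Finset.erase_subset c P)
            (fun x _ _ => pow_nonneg (by norm_num) _)
      _ ≤ 2 * Real.exp (-μ) * 256 := by
          apply mul_le_mul_of_nonneg_left (sum_q_Phi_le a) (by positivity)
      _ = 2 ^ 9 * Real.exp (-μ) := by ring
  have hnn : (0:ℝ) ≤ ∑ x ∈ P.erase c, f x :=
    Finset.sum_nonneg (fun x _ => Real.exp_nonneg _)
  linarith [hsplit]

theorem main_bound (L N : ℕ) [NeZero L] (hN : 2 * N < L)
    (μ : ℝ) (hμ : Real.log 2 ≤ μ) :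
    ∑ x ∈ Finset.powersetCard N (Finset.univ : Finset (Fin L)),
        Real.exp (-μ * (distDrop L N x : ℝ)) ≤
      (L : ℝ) * (1 + 2 ^ 9 * Real.exp (-μ)) := by
  classical
  have hL0 : 0 < L := Nat.pos_of_ne_zero (NeZero.ne L)
  haveI : Nonempty (Fin L) := ⟨⟨0, hL0⟩⟩
  have hstep : ∀ x : Finset (Fin L), Real.exp (-μ * (distDrop L N x : ℝ))
      ≤ ∑ m : Fin L, Real.exp (-μ * (dN L x (droplet L N m) : ℝ)) := by
    intro x
    obtain ⟨m0, hm0⟩ := Nat.sInf_mem (Set.range_nonempty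
      (fun m : Fin L => dN L x (droplet L N m)))
    rw [distDrop, ← hm0]
    exact Finset.single_le_sum (f := fun m : Fin L => Real.exp (-μ * (dN L x (droplet L N m) : ℝ)))
      (fun m _ => Real.exp_nonneg _) (Finset.mem_univ m0)
  calc ∑ x ∈ Finset.powersetCard N (Finset.univ : Finset (Fin L)),
        Real.exp (-μ * (distDrop L N x : ℝ))
      ≤ ∑ x ∈ Finset.powersetCard N (Finset.univ : Finset (Fin L)),
          ∑ m : Fin L, Real.exp (-μ * (dN L x (droplet L N m) : ℝ)) :=
        Finset.sum_le_sum (fun x _ => hstep x)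
    _ = ∑ m : Fin L, ∑ x ∈ Finset.powersetCard N (Finset.univ : Finset (Fin L)),
          Real.exp (-μ * (dN L x (droplet L N m) : ℝ)) := Finset.sum_comm
    _ ≤ ∑ _m : Fin L, (1 + 2 ^ 9 * Real.exp (-μ)) :=
        Finset.sum_le_sum (fun m _ => per_droplet hN μ hμ m)
    _ = (L : ℝ) * (1 + 2 ^ 9 * Real.exp (-μ)) := by
        rw [Finset.sum_const, Finset.card_univ, Fintype.card_fin, nsmul_eq_mul]

end HCAux

/-- Summability estimate: for `N < L/2` and `μ ≥ ln 2`, the sum over all `N`-particle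
configurations of `exp(-μ d_L^N(x, 𝒱_{L,1}^N))` is at most `L (1 + 2⁹ e^{-μ})`. -/
theorem sum_exp_dist_le (L N : ℕ) [NeZero L] (hN : 2 * N < L)
    (μ : ℝ) (hμ : Real.log 2 ≤ μ) :
    ∑ x ∈ Finset.powersetCard N (Finset.univ : Finset (Fin L)),
        Real.exp (-μ * (distDrop L N x : ℝ)) ≤
      (L : ℝ) * (1 + 2 ^ 9 * Real.exp (-μ)) := by
  exact HCAux.main_bound L N hN μ hμ
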